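/- arXiv:1003.3980 — 3 statements merged into one kernel-verified Lean document; each statement's English description precedes it below -/
import Mathlib

section
/- Existence of the inner collinear equilibrium point L₁: assume μ ∈ (0,1), q₁ > 0, A₂ ≥ 0, M_b ≥ 0, T > 0 and n > 0. Then there exists x₀ with −μ < x₀ < 1−μ such that ∂Ω/∂x(x₀, 0) = 0, i.e. g(x₀) = 0 where g(x) = n²x − (1−μ)q₁(x+μ)/|x+μ|³ − μ(x+μ−1)/|x+μ−1|³ − (3/2)μA₂(x+μ−1)/|x+μ−1|⁵ − M_b x/(x²+T²)^{3/2}. (The proof follows from the intermediate value theorem, since g(x) → −∞ as x → (−μ)⁺ and g(x) → +∞ as x → (1−μ)⁻.) -/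
set_option maxHeartbeats 1000000

/-- Effective potential of the generalized Chermnykh-like problem:
`Ω(x,y) = n²(x²+y²)/2 + (1−μ)q₁/r₁ + μ/r₂ + μA₂/(2r₂³) + M_b/(r²+T²)^{1/2}`,
with `r₁ = √((x+μ)²+y²)`, `r₂ = √((x+μ−1)²+y²)`, `r = √(x²+y²)`. -/
noncomputable def Omega (μ q₁ A₂ Mb T n x y : ℝ) : ℝ :=
  n ^ 2 * (x ^ 2 + y ^ 2) / 2
    + (1 - μ) * q₁ / Real.sqrt ((x + μ) ^ 2 + y ^ 2)
    + μ / Real.sqrt ((x + μ - 1) ^ 2 + y ^ 2)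
    + μ * A₂ / (2 * Real.sqrt ((x + μ - 1) ^ 2 + y ^ 2) ^ 3)
    + Mb / Real.sqrt (x ^ 2 + y ^ 2 + T ^ 2)

/-- Restriction of `∂Ω/∂x` to the x-axis:
`g(x) = n²x − (1−μ)q₁(x+μ)/|x+μ|³ − μ(x+μ−1)/|x+μ−1|³
       − (3/2)μA₂(x+μ−1)/|x+μ−1|⁵ − M_b·x/(x²+T²)^{3/2}`. -/
noncomputable def gfun (μ q₁ A₂ Mb T n x : ℝ) : ℝ :=
  n ^ 2 * x - (1 - μ) * q₁ * (x + μ) / |x + μ| ^ 3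
    - μ * (x + μ - 1) / |x + μ - 1| ^ 3
    - (3 / 2) * μ * A₂ * (x + μ - 1) / |x + μ - 1| ^ 5
    - Mb * x / Real.sqrt (x ^ 2 + T ^ 2) ^ 3

/-- Nice closed form of `gfun` on the interval `(-μ, 1-μ)`. -/
noncomputable def Gaux (μ q₁ A₂ Mb T n x : ℝ) : ℝ :=
  n ^ 2 * x - (1 - μ) * q₁ / (x + μ) ^ 2 + μ / (1 - μ - x) ^ 2
    + 3 / 2 * μ * A₂ / (1 - μ - x) ^ 4 - Mb * x / Real.sqrt (x ^ 2 + T ^ 2) ^ 3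

lemma gfun_eq_Gaux (μ q₁ A₂ Mb T n x : ℝ) (h1 : -μ < x) (h2 : x < 1 - μ) :
    gfun μ q₁ A₂ Mb T n x = Gaux μ q₁ A₂ Mb T n x := by
  have e1 : |x + μ| = x + μ := abs_of_pos (by linarith)
  have e2 : |x + μ - 1| = 1 - μ - x := by rw [abs_of_neg (by linarith)]; ring
  have hu : x + μ ≠ 0 := by linarith
  have hv : (1 : ℝ) - μ - x ≠ 0 := by
    intro h; apply absurd h2; linarith [h]
  unfold gfun Gaux
  rw [e1, e2]
  field_simp
  ring

lemma omega_eq (μ q₁ A₂ Mb T n s : ℝ) (h1 : -μ < s) (h2 : s < 1 - μ) :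
    Omega μ q₁ A₂ Mb T n s 0 =
      n ^ 2 * s ^ 2 / 2 + (1 - μ) * q₁ / (s + μ) + μ / (1 - μ - s)
        + μ * A₂ / (2 * (1 - μ - s) ^ 3) + Mb / Real.sqrt (s ^ 2 + T ^ 2) := by
  have e1 : Real.sqrt ((s + μ) ^ 2 + 0 ^ 2) = s + μ := by
    rw [show (0:ℝ)^2 = 0 by norm_num, add_zero, Real.sqrt_sq (by linarith)]
  have e2 : Real.sqrt ((s + μ - 1) ^ 2 + 0 ^ 2) = 1 - μ - s := by
    rw [show (0:ℝ)^2 = 0 by norm_num, add_zero, Real.sqrt_sq_eq_abs,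
      abs_of_neg (by linarith)]; ring
  unfold Omega
  rw [e1, e2]
  norm_num

lemma hasDeriv_lemma (μ q₁ A₂ Mb T n x : ℝ) (hT : 0 < T)
    (h1 : -μ < x) (h2 : x < 1 - μ) :
    HasDerivAt (fun s => Omega μ q₁ A₂ Mb T n s 0) (Gaux μ q₁ A₂ Mb T n x) x := by
  have hu : (0:ℝ) < x + μ := by linarith
  have hv : (0:ℝ) < 1 - μ - x := by linarith
  have hsq : (0:ℝ) < x ^ 2 + T ^ 2 := by positivity
  have hS : (0:ℝ) < Real.sqrt (x ^ 2 + T ^ 2) := Real.sqrt_pos.mpr hsq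
  have hS2 : Real.sqrt (x ^ 2 + T ^ 2) ^ 2 = x ^ 2 + T ^ 2 := Real.sq_sqrt hsq.le
  have d1 : HasDerivAt (fun s : ℝ => n ^ 2 * s ^ 2 / 2) (n ^ 2 * x) x := by
    have := ((hasDerivAt_pow 2 x).const_mul (n ^ 2)).div_const 2
    convert this using 1 <;> try (with_reducible rfl)
    all_goals try rfl
    ring
  have hup : HasDerivAt (fun s : ℝ => s + μ) 1 x := (hasDerivAt_id x).add_const μ
  have d2 : HasDerivAt (fun s : ℝ => (1 - μ) * q₁ / (s + μ))
      (-((1 - μ) * q₁) / (x + μ) ^ 2) x := by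
    have := ((hasDerivAt_const x ((1 - μ) * q₁)).div hup hu.ne')
    convert this using 1 <;> try (with_reducible rfl)
    all_goals try rfl
    field_simp
    ring
  have hvp : HasDerivAt (fun s : ℝ => 1 - μ - s) (-1) x := by
    simpa using (hasDerivAt_id x).const_sub (1 - μ)
  have d3 : HasDerivAt (fun s : ℝ => μ / (1 - μ - s)) (μ / (1 - μ - x) ^ 2) x := by
    have := (hasDerivAt_const x μ).div hvp hv.ne'
    convert this using 1 <;> try (with_reducible rfl)
    all_goals try rfl
    field_simp
    ring
  have d4 : HasDerivAt (fun s : ℝ => μ * A₂ / (2 * (1 - μ - s) ^ 3))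
      (3 / 2 * μ * A₂ / (1 - μ - x) ^ 4) x := by
    have hden : HasDerivAt (fun s : ℝ => 2 * (1 - μ - s) ^ 3)
        (2 * (3 * (1 - μ - x) ^ 2 * (-1))) x := (hvp.pow 3).const_mul 2
    have := (hasDerivAt_const x (μ * A₂)).div hden (by positivity)
    convert this using 1 <;> try (with_reducible rfl)
    all_goals try rfl
    field_simp
    ring
  have dsq : HasDerivAt (fun s : ℝ => s ^ 2 + T ^ 2) (2 * x) x := by
    simpa using (hasDerivAt_pow 2 x).add_const (T ^ 2)
  have dS : HasDerivAt (fun s : ℝ => Real.sqrt (s ^ 2 + T ^ 2))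
      (1 / (2 * Real.sqrt (x ^ 2 + T ^ 2)) * (2 * x)) x :=
    (Real.hasDerivAt_sqrt hsq.ne').comp x dsq
  have d5 : HasDerivAt (fun s : ℝ => Mb / Real.sqrt (s ^ 2 + T ^ 2))
      (-(Mb * x) / Real.sqrt (x ^ 2 + T ^ 2) ^ 3) x := by
    have := (hasDerivAt_const x Mb).div dS hS.ne'
    convert this using 1 <;> try (with_reducible rfl)
    all_goals try rfl
    rw [show Real.sqrt (x ^ 2 + T ^ 2) ^ 3
        = Real.sqrt (x ^ 2 + T ^ 2) ^ 2 * Real.sqrt (x ^ 2 + T ^ 2) by ring, hS2]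
    field_simp
    ring
  have dF : HasDerivAt (fun s : ℝ => n ^ 2 * s ^ 2 / 2 + (1 - μ) * q₁ / (s + μ)
      + μ / (1 - μ - s) + μ * A₂ / (2 * (1 - μ - s) ^ 3)
      + Mb / Real.sqrt (s ^ 2 + T ^ 2)) (Gaux μ q₁ A₂ Mb T n x) x := by
    have := (((d1.add d2).add d3).add d4).add d5
    convert this using 1 <;> try (with_reducible rfl)
    all_goals try rfl
    unfold Gaux
    ring
  refine dF.congr_of_eventuallyEq ?_
  have hmem : Set.Ioo (-μ) (1 - μ) ∈ nhds x := (isOpen_Ioo).mem_nhds ⟨h1, h2⟩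
  filter_upwards [hmem] with s hs
  exact omega_eq μ q₁ A₂ Mb T n s hs.1 hs.2

lemma Gaux_cont (μ q₁ A₂ Mb T n : ℝ) (hT : 0 < T) {s : Set ℝ}
    (hs : ∀ x ∈ s, -μ < x ∧ x < 1 - μ) :
    ContinuousOn (Gaux μ q₁ A₂ Mb T n) s := by
  intro x hx
  obtain ⟨h1, h2⟩ := hs x hx
  have hu : x + μ ≠ 0 := by intro h; linarith [h]
  have hv : (1:ℝ) - μ - x ≠ 0 := by intro h; linarith [h]
  have hS : Real.sqrt (x ^ 2 + T ^ 2) ≠ 0 :=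
    (Real.sqrt_pos.mpr (by positivity)).ne'
  apply ContinuousAt.continuousWithinAt
  unfold Gaux
  have c1 : ContinuousAt (fun x : ℝ => n ^ 2 * x) x := by fun_prop
  have c2 : ContinuousAt (fun x : ℝ => (1 - μ) * q₁ / (x + μ) ^ 2) x :=
    ContinuousAt.div (by fun_prop) (by fun_prop) (pow_ne_zero 2 hu)
  have c3 : ContinuousAt (fun x : ℝ => μ / (1 - μ - x) ^ 2) x :=
    ContinuousAt.div (by fun_prop) (by fun_prop) (pow_ne_zero 2 hv)
  have c4 : ContinuousAt (fun x : ℝ => 3 / 2 * μ * A₂ / (1 - μ - x) ^ 4) x :=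
    ContinuousAt.div (by fun_prop) (by fun_prop) (pow_ne_zero 4 hv)
  have c5 : ContinuousAt (fun x : ℝ => Mb * x / Real.sqrt (x ^ 2 + T ^ 2) ^ 3) x :=
    ContinuousAt.div (by fun_prop) (by fun_prop) (pow_ne_zero 3 hS)
  exact ((((c1.sub c2).add c3).add c4).sub c5)

lemma sqrt_cube_ge (T x : ℝ) (hT : 0 < T) : T ^ 3 ≤ Real.sqrt (x ^ 2 + T ^ 2) ^ 3 := by
  have h : T ≤ Real.sqrt (x ^ 2 + T ^ 2) := by
    have := Real.sqrt_le_sqrt (show T ^ 2 ≤ x ^ 2 + T ^ 2 by nlinarith)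
    rwa [Real.sqrt_sq hT.le] at this
  exact pow_le_pow_left₀ hT.le h 3

lemma Gaux_neg (μ q₁ A₂ Mb T n ε a : ℝ) (hμ1 : 0 < μ) (hμ2 : μ < 1) (hq : 0 < q₁)
    (hA : 0 ≤ A₂) (hMb : 0 ≤ Mb) (hT : 0 < T) (hn : 0 < n)
    (hε0 : 0 < ε) (hε1 : ε ≤ 1 / 4) (hadef : a = -μ + ε)
    (hεC : 2 * (n ^ 2 + 4 + 24 * A₂ + Mb / T ^ 3) * ε ≤ (1 - μ) * q₁) :
    Gaux μ q₁ A₂ Mb T n a < 0 := by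
  have hC : (0:ℝ) < n ^ 2 + 4 + 24 * A₂ + Mb / T ^ 3 := by positivity
  have ha1 : (-1:ℝ) ≤ a := by rw [hadef]; linarith
  have ha2 : a ≤ 1 := by rw [hadef]; linarith
  have hGa : Gaux μ q₁ A₂ Mb T n a
      = n ^ 2 * a - (1 - μ) * q₁ / ε ^ 2 + μ / (1 - ε) ^ 2
        + 3 / 2 * μ * A₂ / (1 - ε) ^ 4 - Mb * a / Real.sqrt (a ^ 2 + T ^ 2) ^ 3 := by
    unfold Gaux
    rw [show a + μ = ε by rw [hadef]; ring, show 1 - μ - a = 1 - ε by rw [hadef]; ring]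
  have h34 : (3:ℝ) / 4 ≤ 1 - ε := by linarith
  have hsq' : (9:ℝ) / 16 ≤ (1 - ε) ^ 2 := by nlinarith
  have h4p : (1:ℝ) / 16 ≤ (1 - ε) ^ 4 := by nlinarith
  have t1 : n ^ 2 * a ≤ n ^ 2 := by nlinarith [sq_nonneg n]
  have hε2 : ε ^ 2 ≤ ε := by nlinarith
  have t2 : 2 * (n ^ 2 + 4 + 24 * A₂ + Mb / T ^ 3) ≤ (1 - μ) * q₁ / ε ^ 2 := by
    rw [le_div_iff₀ (by positivity)]
    nlinarith [mul_nonneg hC.le (sub_nonneg.mpr hε2)]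
  have t3 : μ / (1 - ε) ^ 2 ≤ 4 := by
    rw [div_le_iff₀ (by nlinarith)]
    linarith [hsq']
  have t4 : 3 / 2 * μ * A₂ / (1 - ε) ^ 4 ≤ 24 * A₂ := by
    rw [div_le_iff₀ (by nlinarith)]
    nlinarith [mul_nonneg hA (sub_nonneg.mpr h4p),
      mul_nonneg hA (show (0:ℝ) ≤ 1 - μ by linarith)]
  have hS3 : T ^ 3 ≤ Real.sqrt (a ^ 2 + T ^ 2) ^ 3 := sqrt_cube_ge T a hT
  have hT3 : (0:ℝ) < T ^ 3 := by positivity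
  have t5 : -(Mb * a) / Real.sqrt (a ^ 2 + T ^ 2) ^ 3 ≤ Mb / T ^ 3 := by
    rw [div_le_div_iff₀ (by linarith) hT3]
    nlinarith [mul_nonneg (mul_nonneg hMb (show (0:ℝ) ≤ 1 + a by linarith)) hT3.le,
      mul_nonneg hMb (sub_nonneg.mpr hS3)]
  have t5' : -(Mb / T ^ 3) ≤ Mb * a / Real.sqrt (a ^ 2 + T ^ 2) ^ 3 := by
    have e5 : -(Mb * a) / Real.sqrt (a ^ 2 + T ^ 2) ^ 3
        = - (Mb * a / Real.sqrt (a ^ 2 + T ^ 2) ^ 3) := by ring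
    rw [e5] at t5
    linarith
  rw [hGa]
  linarith [t1, t2, t3, t4, t5']

lemma Gaux_pos (μ q₁ A₂ Mb T n δ b : ℝ) (hμ1 : 0 < μ) (hμ2 : μ < 1) (hq : 0 < q₁)
    (hA : 0 ≤ A₂) (hMb : 0 ≤ Mb) (hT : 0 < T) (hn : 0 < n)
    (hδ0 : 0 < δ) (hδ1 : δ ≤ 1 / 4) (hbdef : b = 1 - μ - δ)
    (hδC : 2 * (n ^ 2 + 4 * q₁ + Mb / T ^ 3) * δ ≤ μ) :
    0 < Gaux μ q₁ A₂ Mb T n b := by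
  have hD : (0:ℝ) < n ^ 2 + 4 * q₁ + Mb / T ^ 3 := by positivity
  have hb1 : (-1:ℝ) ≤ b := by rw [hbdef]; linarith
  have hb2 : b ≤ 1 := by rw [hbdef]; linarith
  have hGb : Gaux μ q₁ A₂ Mb T n b
      = n ^ 2 * b - (1 - μ) * q₁ / (1 - δ) ^ 2 + μ / δ ^ 2
        + 3 / 2 * μ * A₂ / δ ^ 4 - Mb * b / Real.sqrt (b ^ 2 + T ^ 2) ^ 3 := by
    unfold Gaux
    rw [show b + μ = 1 - δ by rw [hbdef]; ring, show 1 - μ - b = δ by rw [hbdef]; ring]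
  have h34 : (3:ℝ) / 4 ≤ 1 - δ := by linarith
  have hsq' : (9:ℝ) / 16 ≤ (1 - δ) ^ 2 := by nlinarith
  have t1 : -(n ^ 2) ≤ n ^ 2 * b := by nlinarith [sq_nonneg n]
  have hδ2 : δ ^ 2 ≤ δ := by nlinarith
  have t2 : (1 - μ) * q₁ / (1 - δ) ^ 2 ≤ 4 * q₁ := by
    rw [div_le_iff₀ (by nlinarith)]
    nlinarith [mul_nonneg (show (0:ℝ) ≤ μ by linarith) hq.le,
      mul_nonneg hq.le (sub_nonneg.mpr hsq')]
  have t3 : 2 * (n ^ 2 + 4 * q₁ + Mb / T ^ 3) ≤ μ / δ ^ 2 := by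
    rw [le_div_iff₀ (by positivity)]
    nlinarith [mul_nonneg hD.le (sub_nonneg.mpr hδ2)]
  have t4 : (0:ℝ) ≤ 3 / 2 * μ * A₂ / δ ^ 4 := by positivity
  have hS3 : T ^ 3 ≤ Real.sqrt (b ^ 2 + T ^ 2) ^ 3 := sqrt_cube_ge T b hT
  have hT3 : (0:ℝ) < T ^ 3 := by positivity
  have t5 : Mb * b / Real.sqrt (b ^ 2 + T ^ 2) ^ 3 ≤ Mb / T ^ 3 := by
    rw [div_le_div_iff₀ (by linarith) hT3]
    nlinarith [mul_nonneg (mul_nonneg hMb (show (0:ℝ) ≤ 1 - b by linarith)) hT3.le,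
      mul_nonneg hMb (sub_nonneg.mpr hS3)]
  rw [hGb]
  linarith [t1, t2, t3, t4, t5]

/-- **Existence of the inner collinear point `L₁`.** There is `x₀` with `−μ < x₀ < 1−μ`
such that `∂Ω/∂x(x₀, 0) = 0`, i.e. `g(x₀) = 0`. -/
theorem exists_L1
    (μ q₁ A₂ Mb T n : ℝ) (hμ : μ ∈ Set.Ioo (0 : ℝ) 1) (hq : 0 < q₁) (hA : 0 ≤ A₂)
    (hMb : 0 ≤ Mb) (hT : 0 < T) (hn : 0 < n) :
    ∃ x₀ : ℝ, -μ < x₀ ∧ x₀ < 1 - μ ∧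
      deriv (fun s => Omega μ q₁ A₂ Mb T n s 0) x₀ = 0 ∧
      gfun μ q₁ A₂ Mb T n x₀ = 0 := by
  obtain ⟨hμ1, hμ2⟩ := hμ
  have hC : (0:ℝ) < n ^ 2 + 4 + 24 * A₂ + Mb / T ^ 3 := by positivity
  have hD : (0:ℝ) < n ^ 2 + 4 * q₁ + Mb / T ^ 3 := by positivity
  set ε : ℝ := min (1 / 4) ((1 - μ) * q₁ / (2 * (n ^ 2 + 4 + 24 * A₂ + Mb / T ^ 3)))
    with hεdef
  set δ : ℝ := min (1 / 4) (μ / (2 * (n ^ 2 + 4 * q₁ + Mb / T ^ 3))) with hδdef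
  have hε0 : 0 < ε := lt_min (by norm_num)
    (div_pos (mul_pos (by linarith) hq) (by positivity))
  have hδ0 : 0 < δ := lt_min (by norm_num) (div_pos hμ1 (by positivity))
  have hε1 : ε ≤ 1 / 4 := min_le_left _ _
  have hδ1 : δ ≤ 1 / 4 := min_le_left _ _
  have hεC : 2 * (n ^ 2 + 4 + 24 * A₂ + Mb / T ^ 3) * ε ≤ (1 - μ) * q₁ := by
    have h := (le_div_iff₀ (show (0:ℝ) < 2 * (n ^ 2 + 4 + 24 * A₂ + Mb / T ^ 3)
      by positivity)).mp (min_le_right (1/4 : ℝ)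
        ((1 - μ) * q₁ / (2 * (n ^ 2 + 4 + 24 * A₂ + Mb / T ^ 3))))
    nlinarith [h, hεdef]
  have hδC : 2 * (n ^ 2 + 4 * q₁ + Mb / T ^ 3) * δ ≤ μ := by
    have h := (le_div_iff₀ (show (0:ℝ) < 2 * (n ^ 2 + 4 * q₁ + Mb / T ^ 3)
      by positivity)).mp (min_le_right (1/4 : ℝ)
        (μ / (2 * (n ^ 2 + 4 * q₁ + Mb / T ^ 3))))
    nlinarith [h, hδdef]
  set a : ℝ := -μ + ε with hadef
  set b : ℝ := 1 - μ - δ with hbdef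
  have hab : a ≤ b := by rw [hadef, hbdef]; linarith
  have hmem : ∀ x ∈ Set.Icc a b, -μ < x ∧ x < 1 - μ := by
    intro x hx
    constructor
    · have := hx.1; rw [hadef] at this; linarith
    · have := hx.2; rw [hbdef] at this; linarith
  have hcont : ContinuousOn (Gaux μ q₁ A₂ Mb T n) (Set.Icc a b) :=
    Gaux_cont μ q₁ A₂ Mb T n hT hmem
  have hGa : Gaux μ q₁ A₂ Mb T n a < 0 :=
    Gaux_neg μ q₁ A₂ Mb T n ε a hμ1 hμ2 hq hA hMb hT hn hε0 hε1 hadef hεC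
  have hGb : 0 < Gaux μ q₁ A₂ Mb T n b :=
    Gaux_pos μ q₁ A₂ Mb T n δ b hμ1 hμ2 hq hA hMb hT hn hδ0 hδ1 hbdef hδC
  have hsub := intermediate_value_Ioo hab hcont
  obtain ⟨x₀, hx₀mem, hGx₀⟩ := hsub ⟨hGa, hGb⟩
  have hx1 : -μ < x₀ := by have := hx₀mem.1; rw [hadef] at this; linarith
  have hx2 : x₀ < 1 - μ := by have := hx₀mem.2; rw [hbdef] at this; linarith
  refine ⟨x₀, hx1, hx2, ?_, ?_⟩
  · rw [(hasDeriv_lemma μ q₁ A₂ Mb T n x₀ hT hx1 hx2).deriv, hGx₀]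
  · rw [gfun_eq_Gaux μ q₁ A₂ Mb T n x₀ hx1 hx2, hGx₀]
end

section
/- Existence of the outer collinear equilibrium point L₂: assume μ ∈ (0,1), q₁ > 0, A₂ ≥ 0, M_b ≥ 0, T > 0 and n > 0. Then there exists x₀ with x₀ > 1−μ such that ∂Ω/∂x(x₀, 0) = 0, i.e. g(x₀) = 0 where g(x) = n²x − (1−μ)q₁(x+μ)/|x+μ|³ − μ(x+μ−1)/|x+μ−1|³ − (3/2)μA₂(x+μ−1)/|x+μ−1|⁵ − M_b x/(x²+T²)^{3/2}. (The proof follows from the intermediate value theorem, since g(x) → −∞ as x → (1−μ)⁺ and g(x) → +∞ as x → +∞.) -/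
set_option maxHeartbeats 1000000

/-- On the region `x + μ > 1 > 0` the absolute values in `gfun` can be removed. -/
lemma gfun_eq (μ q₁ A₂ Mb T n x : ℝ) (hu : 0 < x + μ) (hv : 0 < x + μ - 1) :
    gfun μ q₁ A₂ Mb T n x =
      n ^ 2 * x - (1 - μ) * q₁ / (x + μ) ^ 2 - μ / (x + μ - 1) ^ 2
        - (3 / 2) * μ * A₂ / (x + μ - 1) ^ 4
        - Mb * x / Real.sqrt (x ^ 2 + T ^ 2) ^ 3 := by
  unfold gfun
  rw [abs_of_pos hu, abs_of_pos hv]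
  field_simp

/-- For `x > 1 - μ`, the derivative of `s ↦ Ω(s,0)` equals `gfun` at `x`. -/
lemma deriv_Omega_eq (μ q₁ A₂ Mb T n x : ℝ) (hμ1 : μ < 1) (hT : 0 < T)
    (hx : 1 - μ < x) :
    deriv (fun s => Omega μ q₁ A₂ Mb T n s 0) x = gfun μ q₁ A₂ Mb T n x := by
  have hv : 0 < x + μ - 1 := by linarith
  have hu : 0 < x + μ := by linarith
  have hx0 : 0 < x := by linarith
  set F : ℝ → ℝ := fun s =>
    n ^ 2 * s ^ 2 / 2 + (1 - μ) * q₁ * (s + μ)⁻¹ + μ * (s + μ - 1)⁻¹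
      + (μ * A₂ / 2) * ((s + μ - 1) ^ 3)⁻¹ + Mb * (Real.sqrt (s ^ 2 + T ^ 2))⁻¹
    with hF
  have hopen : IsOpen {s : ℝ | 1 - μ < s} := isOpen_lt continuous_const continuous_id
  have hev : (fun s => Omega μ q₁ A₂ Mb T n s 0) =ᶠ[nhds x] F := by
    filter_upwards [hopen.mem_nhds hx] with s hs
    have hs' : 1 - μ < s := hs
    have hvs : 0 < s + μ - 1 := by linarith
    have hus : 0 < s + μ := by linarith
    have hSpos : 0 < Real.sqrt (s ^ 2 + T ^ 2) :=
      Real.sqrt_pos.mpr (by positivity)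
    simp only [Omega, hF]
    rw [show (s + μ) ^ 2 + (0:ℝ) ^ 2 = (s + μ) ^ 2 by ring,
        show (s + μ - 1) ^ 2 + (0:ℝ) ^ 2 = (s + μ - 1) ^ 2 by ring,
        show s ^ 2 + (0:ℝ) ^ 2 + T ^ 2 = s ^ 2 + T ^ 2 by ring,
        Real.sqrt_sq hus.le, Real.sqrt_sq hvs.le]
    field_simp
    ring
  rw [hev.deriv_eq]
  have hSpos : 0 < Real.sqrt (x ^ 2 + T ^ 2) := Real.sqrt_pos.mpr (by positivity)
  have h1 : HasDerivAt (fun s : ℝ => n ^ 2 * s ^ 2 / 2) (n ^ 2 * x) x := by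
    have h := ((hasDerivAt_pow 2 x).const_mul (n ^ 2)).div_const 2
    convert h using 1
    push_cast
    all_goals first | rfl | (push_cast; ring)
  have hlin : HasDerivAt (fun s : ℝ => s + μ) 1 x := (hasDerivAt_id x).add_const μ
  have hlin2 : HasDerivAt (fun s : ℝ => s + μ - 1) 1 x := hlin.sub_const 1
  have h2 : HasDerivAt (fun s : ℝ => (1 - μ) * q₁ * (s + μ)⁻¹)
      ((1 - μ) * q₁ * (-1 / (x + μ) ^ 2)) x :=
    (hlin.inv hu.ne').const_mul _
  have h3 : HasDerivAt (fun s : ℝ => μ * (s + μ - 1)⁻¹)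
      (μ * (-1 / (x + μ - 1) ^ 2)) x :=
    (hlin2.inv hv.ne').const_mul _
  have h4 : HasDerivAt (fun s : ℝ => (μ * A₂ / 2) * ((s + μ - 1) ^ 3)⁻¹)
      ((μ * A₂ / 2) * (-(↑(3:ℕ) * (x + μ - 1) ^ (3 - 1) * 1) / ((x + μ - 1) ^ 3) ^ 2)) x :=
    ((hlin2.pow 3).inv (pow_ne_zero 3 hv.ne')).const_mul _
  have hsq : HasDerivAt (fun s : ℝ => s ^ 2 + T ^ 2) (2 * x) x := by
    simpa using (hasDerivAt_pow 2 x).add_const (T ^ 2)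
  have hsqrt : HasDerivAt (fun s : ℝ => Real.sqrt (s ^ 2 + T ^ 2))
      (1 / (2 * Real.sqrt (x ^ 2 + T ^ 2)) * (2 * x)) x :=
    (Real.hasDerivAt_sqrt (by positivity)).comp x hsq
  have h5 : HasDerivAt (fun s : ℝ => Mb * (Real.sqrt (s ^ 2 + T ^ 2))⁻¹)
      (Mb * (-(1 / (2 * Real.sqrt (x ^ 2 + T ^ 2)) * (2 * x)) / Real.sqrt (x ^ 2 + T ^ 2) ^ 2)) x :=
    (hsqrt.inv hSpos.ne').const_mul _
  have hD : HasDerivAt F _ x := (((h1.add h2).add h3).add h4).add h5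
  have hS : Real.sqrt (x ^ 2 + T ^ 2) ≠ 0 := hSpos.ne'
  have e4 : (μ * A₂ / 2) * (-(((3:ℕ):ℝ) * (x + μ - 1) ^ (3 - 1) * 1) / ((x + μ - 1) ^ 3) ^ 2)
      = -((3 / 2) * μ * A₂ / (x + μ - 1) ^ 4) := by
    push_cast
    field_simp
  have e5 : Mb * (-(1 / (2 * Real.sqrt (x ^ 2 + T ^ 2)) * (2 * x)) / Real.sqrt (x ^ 2 + T ^ 2) ^ 2)
      = -(Mb * x / Real.sqrt (x ^ 2 + T ^ 2) ^ 3) := by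
    have hS2 : Real.sqrt (x ^ 2 + T ^ 2) ^ 2 = x ^ 2 + T ^ 2 :=
      Real.sq_sqrt (by positivity)
    field_simp
  rw [hD.deriv, gfun_eq μ q₁ A₂ Mb T n x hu hv]
  linear_combination e4 + e5

/-- **Existence of the outer collinear point `L₂`.** There is `x₀` with `x₀ > 1−μ`
such that `∂Ω/∂x(x₀, 0) = 0`, i.e. `g(x₀) = 0`. -/
theorem exists_L2
    (μ q₁ A₂ Mb T n : ℝ) (hμ : μ ∈ Set.Ioo (0 : ℝ) 1) (hq : 0 < q₁) (hA : 0 ≤ A₂)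
    (hMb : 0 ≤ Mb) (hT : 0 < T) (hn : 0 < n) :
    ∃ x₀ : ℝ, 1 - μ < x₀ ∧
      deriv (fun s => Omega μ q₁ A₂ Mb T n s 0) x₀ = 0 ∧
      gfun μ q₁ A₂ Mb T n x₀ = 0 := by
  obtain ⟨hμ0, hμ1⟩ := hμ
  have hn2 : 0 < n ^ 2 := by positivity
  set δ : ℝ := min 1 (Real.sqrt (μ / (2 * n ^ 2))) with hδdef
  have hδpos : 0 < δ := lt_min one_pos (Real.sqrt_pos.mpr (by positivity))
  have hδ1 : δ ≤ 1 := min_le_left _ _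
  have hδ2 : δ ^ 2 ≤ μ / (2 * n ^ 2) := by
    have h := min_le_right 1 (Real.sqrt (μ / (2 * n ^ 2)))
    calc δ ^ 2 ≤ Real.sqrt (μ / (2 * n ^ 2)) ^ 2 := by nlinarith [hδpos.le]
    _ = μ / (2 * n ^ 2) := Real.sq_sqrt (by positivity)
  set a : ℝ := 1 - μ + δ with ha
  set C : ℝ := (1 - μ) * q₁ + μ + (3 / 2) * μ * A₂ + Mb with hC
  set b : ℝ := max (2 - μ) ((C + 1) / n ^ 2) with hb
  have hab : a ≤ b := le_trans (by simp only [ha]; linarith) (le_max_left _ _)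
  have hb2 : 2 - μ ≤ b := le_max_left _ _
  have hbC : (C + 1) / n ^ 2 ≤ b := le_max_right _ _
  -- g(a) ≤ 0
  have hua : 0 < a + μ := by simp only [ha]; linarith
  have hva : 0 < a + μ - 1 := by simp only [ha]; linarith
  have hga : gfun μ q₁ A₂ Mb T n a ≤ 0 := by
    rw [gfun_eq μ q₁ A₂ Mb T n a hua hva]
    have hav : a + μ - 1 = δ := by simp only [ha]; ring
    rw [hav]
    have ht1 : 0 ≤ (1 - μ) * q₁ / (a + μ) ^ 2 :=
      div_nonneg (mul_nonneg (by linarith) hq.le) (by positivity)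
    have ht3 : 0 ≤ (3 / 2) * μ * A₂ / δ ^ 4 := by positivity
    have ha0 : 0 < a := by simp only [ha]; linarith
    have ht4 : 0 ≤ Mb * a / Real.sqrt (a ^ 2 + T ^ 2) ^ 3 := by positivity
    have hterm : 2 * n ^ 2 ≤ μ / δ ^ 2 := by
      rw [le_div_iff₀ (by positivity)]
      calc 2 * n ^ 2 * δ ^ 2 ≤ 2 * n ^ 2 * (μ / (2 * n ^ 2)) := by nlinarith
      _ = μ := by field_simp
    have haval : n ^ 2 * a ≤ 2 * n ^ 2 := by
      have : a ≤ 2 := by simp only [ha]; linarith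
      nlinarith
    nlinarith [ht1, ht3, ht4, hterm, haval]
  -- g(b) ≥ 1
  have hub : 0 < b + μ := by linarith
  have hvb : 0 < b + μ - 1 := by linarith
  have hb1 : 1 ≤ b := by linarith
  have hgb : 1 ≤ gfun μ q₁ A₂ Mb T n b := by
    rw [gfun_eq μ q₁ A₂ Mb T n b hub hvb]
    have hub1 : 1 ≤ b + μ := by linarith
    have hvb1 : 1 ≤ b + μ - 1 := by linarith
    have hsq1 : (1:ℝ) ≤ (b + μ) ^ 2 := by nlinarith
    have hsq2 : (1:ℝ) ≤ (b + μ - 1) ^ 2 := by nlinarith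
    have hsq4 : (1:ℝ) ≤ (b + μ - 1) ^ 4 := by nlinarith
    have ht1 : (1 - μ) * q₁ / (b + μ) ^ 2 ≤ (1 - μ) * q₁ :=
      div_le_self (mul_nonneg (by linarith) hq.le) hsq1
    have ht2 : μ / (b + μ - 1) ^ 2 ≤ μ := div_le_self hμ0.le hsq2
    have ht3 : (3 / 2) * μ * A₂ / (b + μ - 1) ^ 4 ≤ (3 / 2) * μ * A₂ :=
      div_le_self (by positivity) hsq4
    have hSb : b ≤ Real.sqrt (b ^ 2 + T ^ 2) := by
      have h := Real.sqrt_le_sqrt (show b ^ 2 ≤ b ^ 2 + T ^ 2 by nlinarith)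
      rwa [Real.sqrt_sq (by linarith)] at h
    have hS1 : 1 ≤ Real.sqrt (b ^ 2 + T ^ 2) := le_trans hb1 hSb
    have hS3 : Real.sqrt (b ^ 2 + T ^ 2) ≤ Real.sqrt (b ^ 2 + T ^ 2) ^ 3 := by
      have h0 : (0:ℝ) ≤ Real.sqrt (b ^ 2 + T ^ 2) := le_trans zero_le_one hS1
      nlinarith [mul_nonneg (mul_nonneg (sub_nonneg.mpr hS1) h0) h0,
        mul_nonneg (sub_nonneg.mpr hS1) h0]
    have ht4 : Mb * b / Real.sqrt (b ^ 2 + T ^ 2) ^ 3 ≤ Mb := by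
      rw [div_le_iff₀ (by positivity)]
      calc Mb * b ≤ Mb * Real.sqrt (b ^ 2 + T ^ 2) ^ 3 :=
        mul_le_mul_of_nonneg_left (le_trans hSb hS3) hMb
      _ = Mb * Real.sqrt (b ^ 2 + T ^ 2) ^ 3 := rfl
    have hnb : C + 1 ≤ n ^ 2 * b := by
      rw [div_le_iff₀ hn2] at hbC
      linarith
    simp only [hC] at hnb ⊢
    linarith
  -- IVT
  have hcont : ContinuousOn (gfun μ q₁ A₂ Mb T n) (Set.Icc a b) := by
    unfold gfun
    have hc1 : ∀ x ∈ Set.Icc a b, |x + μ| ^ 3 ≠ 0 := by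
      intro x hx
      have : 0 < x + μ := by have := hx.1; linarith
      positivity
    have hc2 : ∀ x ∈ Set.Icc a b, |x + μ - 1| ^ 3 ≠ 0 := by
      intro x hx
      have : 0 < x + μ - 1 := by have := hx.1; simp only [ha] at this; linarith
      positivity
    have hc3 : ∀ x ∈ Set.Icc a b, |x + μ - 1| ^ 5 ≠ 0 := by
      intro x hx
      have : 0 < x + μ - 1 := by have := hx.1; simp only [ha] at this; linarith
      positivity
    have hc4 : ∀ x ∈ Set.Icc a b, Real.sqrt (x ^ 2 + T ^ 2) ^ 3 ≠ 0 := by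
      intro x _
      have : 0 < Real.sqrt (x ^ 2 + T ^ 2) := Real.sqrt_pos.mpr (by positivity)
      positivity
    apply ContinuousOn.sub
    apply ContinuousOn.sub
    apply ContinuousOn.sub
    apply ContinuousOn.sub
    · fun_prop
    · exact ContinuousOn.div (by fun_prop) (by fun_prop) hc1
    · exact ContinuousOn.div (by fun_prop) (by fun_prop) hc2
    · exact ContinuousOn.div (by fun_prop) (by fun_prop) hc3
    · exact ContinuousOn.div (by fun_prop) (by fun_prop) hc4
  have hmem : (0 : ℝ) ∈ Set.Icc (gfun μ q₁ A₂ Mb T n a) (gfun μ q₁ A₂ Mb T n b) :=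
    ⟨hga, by linarith⟩
  obtain ⟨x₀, hx₀mem, hgx₀⟩ := intermediate_value_Icc hab hcont hmem
  have hx₀gt : 1 - μ < x₀ := by
    have := hx₀mem.1
    simp only [ha] at this
    linarith
  exact ⟨x₀, hx₀gt, by rw [deriv_Omega_eq μ q₁ A₂ Mb T n x₀ hμ1 hT hx₀gt]; exact hgx₀, hgx₀⟩
end

section
/- Existence of the collinear equilibrium point L₃: assume μ ∈ (0,1), q₁ > 0, A₂ ≥ 0, M_b ≥ 0, T > 0 and n > 0. Then there exists x₀ with x₀ < −μ such that ∂Ω/∂x(x₀, 0) = 0, i.e. g(x₀) = 0 where g(x) = n²x − (1−μ)q₁(x+μ)/|x+μ|³ − μ(x+μ−1)/|x+μ−1|³ − (3/2)μA₂(x+μ−1)/|x+μ−1|⁵ − M_b x/(x²+T²)^{3/2}. (The proof follows from the intermediate value theorem, since g(x) → +∞ as x → (−μ)⁻ and g(x) → −∞ as x → −∞.) -/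
lemma gfun_rewrite (μ q₁ A₂ Mb T n x : ℝ) (hx : x + μ < 0) :
    gfun μ q₁ A₂ Mb T n x
      = n ^ 2 * x + (1 - μ) * q₁ / (x + μ) ^ 2 + μ / (x + μ - 1) ^ 2
        + (3 / 2) * μ * A₂ / (x + μ - 1) ^ 4
        - Mb * x / Real.sqrt (x ^ 2 + T ^ 2) ^ 3 := by
  have h2 : x + μ - 1 < 0 := by linarith
  have h1 : x + μ ≠ 0 := ne_of_lt hx
  have h2' : x + μ - 1 ≠ 0 := ne_of_lt h2
  have e1 : (1 - μ) * q₁ * (x + μ) / (-(x + μ)) ^ 3 = -((1 - μ) * q₁ / (x + μ) ^ 2) := by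
    rw [show (-(x + μ)) ^ 3 = -((x + μ) ^ 2 * (x + μ)) by ring, div_neg, mul_comm ((x+μ)^2),
      ← div_div, mul_div_assoc, div_self h1, mul_one]
  have e2 : μ * (x + μ - 1) / (-(x + μ - 1)) ^ 3 = -(μ / (x + μ - 1) ^ 2) := by
    rw [show (-(x + μ - 1)) ^ 3 = -((x + μ - 1) ^ 2 * (x + μ - 1)) by ring, div_neg,
      mul_comm ((x+μ-1)^2), ← div_div, mul_div_assoc, div_self h2', mul_one]
  have e3 : (3 / 2) * μ * A₂ * (x + μ - 1) / (-(x + μ - 1)) ^ 5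
      = -((3 / 2) * μ * A₂ / (x + μ - 1) ^ 4) := by
    rw [show (-(x + μ - 1)) ^ 5 = -((x + μ - 1) ^ 4 * (x + μ - 1)) by ring, div_neg,
      mul_comm ((x+μ-1)^4), ← div_div, mul_div_assoc, div_self h2', mul_one]
  rw [gfun, abs_of_neg hx, abs_of_neg h2, e1, e2, e3]
  ring

lemma hasDerivAt_Omega (μ q₁ A₂ Mb T n x : ℝ) (hT : 0 < T) (hx : x < -μ) :
    HasDerivAt (fun s => Omega μ q₁ A₂ Mb T n s 0) (gfun μ q₁ A₂ Mb T n x) x := by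
  have hx0 : x + μ < 0 := by linarith
  have hx2 : x + μ - 1 < 0 := by linarith
  have hu : (0:ℝ) < x ^ 2 + T ^ 2 := by positivity
  have hsq : (0:ℝ) < Real.sqrt (x ^ 2 + T ^ 2) := Real.sqrt_pos.mpr hu
  set F : ℝ → ℝ := fun s =>
    n ^ 2 * s ^ 2 / 2 + (1 - μ) * q₁ * (-(s + μ))⁻¹ + μ * (-(s + μ - 1))⁻¹
      + μ * A₂ * (2 * (-(s + μ - 1)) ^ 3)⁻¹ + Mb * (Real.sqrt (s ^ 2 + T ^ 2))⁻¹ with hF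
  have hEq : (fun s => Omega μ q₁ A₂ Mb T n s 0) =ᶠ[nhds x] F := by
    filter_upwards [Iio_mem_nhds hx] with s hs
    have hs1 : s + μ < 0 := by simpa [Set.mem_Iio] using by linarith [Set.mem_Iio.mp hs]
    have hs2 : s + μ - 1 < 0 := by linarith
    have r1 : Real.sqrt ((s + μ) ^ 2 + 0 ^ 2) = -(s + μ) := by
      rw [show (s + μ) ^ 2 + (0:ℝ) ^ 2 = (s + μ) ^ 2 by ring, Real.sqrt_sq_eq_abs,
        abs_of_neg hs1]
    have r2 : Real.sqrt ((s + μ - 1) ^ 2 + 0 ^ 2) = -(s + μ - 1) := by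
      rw [show (s + μ - 1) ^ 2 + (0:ℝ) ^ 2 = (s + μ - 1) ^ 2 by ring, Real.sqrt_sq_eq_abs,
        abs_of_neg hs2]
    rw [Omega, r1, r2, hF]
    rw [show s ^ 2 + (0:ℝ) ^ 2 + T ^ 2 = s ^ 2 + T ^ 2 by ring]
    simp [div_eq_mul_inv]
  have h1 : HasDerivAt (fun s : ℝ => -(s + μ)) (-1) x := ((hasDerivAt_id x).add_const μ).neg
  have h2 : HasDerivAt (fun s : ℝ => -(s + μ - 1)) (-1) x := by
    have h := ((hasDerivAt_id x).add_const (μ - 1)).neg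
    rw [show (-fun s : ℝ => (id s + (μ - 1))) = (fun s : ℝ => -(s + μ - 1)) from
      funext fun s => by simp; ring] at h
    exact h
  have hx1ne : -(x + μ) ≠ 0 := by linarith
  have hx2ne : -(x + μ - 1) ≠ 0 := by linarith
  have h1ne : x + μ ≠ 0 := ne_of_lt hx0
  have h2ne : x + μ - 1 ≠ 0 := ne_of_lt hx2
  have hsne : Real.sqrt (x ^ 2 + T ^ 2) ≠ 0 := ne_of_gt hsq
  have d1 : HasDerivAt (fun s : ℝ => (1 - μ) * q₁ * (-(s + μ))⁻¹)
      ((1 - μ) * q₁ * (-(-1) / (-(x + μ)) ^ 2)) x := (h1.inv hx1ne).const_mul _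
  have d2 : HasDerivAt (fun s : ℝ => μ * (-(s + μ - 1))⁻¹)
      (μ * (-(-1) / (-(x + μ - 1)) ^ 2)) x := (h2.inv hx2ne).const_mul _
  have h3 : HasDerivAt (fun s : ℝ => 2 * (-(s + μ - 1)) ^ 3)
      (2 * (3 * (-(x + μ - 1)) ^ 2 * (-1))) x := (h2.pow 3).const_mul 2
  have h3ne : 2 * (-(x + μ - 1)) ^ 3 ≠ 0 := by positivity
  have d3 : HasDerivAt (fun s : ℝ => μ * A₂ * (2 * (-(s + μ - 1)) ^ 3)⁻¹)
      (μ * A₂ * (-(2 * (3 * (-(x + μ - 1)) ^ 2 * (-1))) / (2 * (-(x + μ - 1)) ^ 3) ^ 2)) x :=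
    (h3.inv h3ne).const_mul _
  have hu' : HasDerivAt (fun s : ℝ => s ^ 2 + T ^ 2) (2 * x) x := by
    have := (hasDerivAt_pow 2 x).add_const (T ^ 2)
    simpa using this
  have hsqrt : HasDerivAt (fun s : ℝ => Real.sqrt (s ^ 2 + T ^ 2))
      (1 / (2 * Real.sqrt (x ^ 2 + T ^ 2)) * (2 * x)) x :=
    (Real.hasDerivAt_sqrt (ne_of_gt hu)).comp x hu'
  have d4 : HasDerivAt (fun s : ℝ => Mb * (Real.sqrt (s ^ 2 + T ^ 2))⁻¹)
      (Mb * (-(1 / (2 * Real.sqrt (x ^ 2 + T ^ 2)) * (2 * x)) / Real.sqrt (x ^ 2 + T ^ 2) ^ 2)) x :=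
    (hsqrt.inv hsne).const_mul _
  have d0 : HasDerivAt (fun s : ℝ => n ^ 2 * s ^ 2 / 2) (n ^ 2 * x) x := by
    have := ((hasDerivAt_pow 2 x).const_mul (n ^ 2)).div_const 2
    refine this.congr_deriv ?_
    ring
  have hFd := (((d0.add d1).add d2).add d3).add d4
  have key : HasDerivAt F (gfun μ q₁ A₂ Mb T n x) x := by
    have t1 : (1 - μ) * q₁ * (-(-1 : ℝ) / (-(x + μ)) ^ 2) = (1 - μ) * q₁ / (x + μ) ^ 2 := by
      rw [show (-(x + μ)) ^ 2 = (x + μ) ^ 2 by ring, neg_neg, mul_one_div]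
    have t2 : μ * (-(-1 : ℝ) / (-(x + μ - 1)) ^ 2) = μ / (x + μ - 1) ^ 2 := by
      rw [show (-(x + μ - 1)) ^ 2 = (x + μ - 1) ^ 2 by ring, neg_neg, mul_one_div]
    have t3 : ∀ w : ℝ, w ≠ 0 → μ * A₂ * (-(2 * (3 * (-w) ^ 2 * (-1))) / (2 * (-w) ^ 3) ^ 2)
        = (3 / 2) * μ * A₂ / w ^ 4 := by
      intro w hw
      have hw6 : w ^ 6 * w⁻¹ ^ 6 = 1 := by
        rw [inv_pow, mul_inv_cancel₀ (pow_ne_zero 6 hw)]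
      field_simp
    have t4 : ∀ S : ℝ, S ≠ 0 → Mb * (-(1 / (2 * S) * (2 * x)) / S ^ 2)
        = -(Mb * x / S ^ 3) := by
      intro S hS
      field_simp
    refine hFd.congr_deriv ?_
    rw [gfun_rewrite μ q₁ A₂ Mb T n x hx0, t1, t2, t3 (x + μ - 1) h2ne,
      t4 (Real.sqrt (x ^ 2 + T ^ 2)) hsne]
    ring
  exact key.congr_of_eventuallyEq hEq

lemma gfun_continuousOn (μ q₁ A₂ Mb T n c : ℝ) (hT : 0 < T) (hc : c < -μ) :
    ContinuousOn (fun x => gfun μ q₁ A₂ Mb T n x) (Set.Iic c) := by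
  have hne1 : ∀ x ∈ Set.Iic c, |x + μ| ^ 3 ≠ 0 := by
    intro x hx
    have : x + μ < 0 := by have := Set.mem_Iic.mp hx; linarith
    exact pow_ne_zero _ (abs_ne_zero.mpr (ne_of_lt this))
  have hne2 : ∀ x ∈ Set.Iic c, |x + μ - 1| ^ 3 ≠ 0 := by
    intro x hx
    have : x + μ - 1 < 0 := by have := Set.mem_Iic.mp hx; linarith
    exact pow_ne_zero _ (abs_ne_zero.mpr (ne_of_lt this))
  have hne3 : ∀ x ∈ Set.Iic c, |x + μ - 1| ^ 5 ≠ 0 := by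
    intro x hx
    have : x + μ - 1 < 0 := by have := Set.mem_Iic.mp hx; linarith
    exact pow_ne_zero _ (abs_ne_zero.mpr (ne_of_lt this))
  have hne4 : ∀ x ∈ Set.Iic c, Real.sqrt (x ^ 2 + T ^ 2) ^ 3 ≠ 0 := by
    intro x _
    have : (0:ℝ) < x ^ 2 + T ^ 2 := by positivity
    positivity
  unfold gfun
  apply ContinuousOn.sub
  apply ContinuousOn.sub
  apply ContinuousOn.sub
  apply ContinuousOn.sub
  · fun_prop
  · exact ContinuousOn.div (by fun_prop) (by fun_prop) hne1
  · exact ContinuousOn.div (by fun_prop) (by fun_prop) hne2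
  · exact ContinuousOn.div (by fun_prop) (by fun_prop) hne3
  · exact ContinuousOn.div (by fun_prop) (by fun_prop) hne4

/-- **Existence of the collinear point `L₃`.** There is `x₀` with `x₀ < −μ`
such that `∂Ω/∂x(x₀, 0) = 0`, i.e. `g(x₀) = 0`. -/
theorem exists_L3
    (μ q₁ A₂ Mb T n : ℝ) (hμ : μ ∈ Set.Ioo (0 : ℝ) 1) (hq : 0 < q₁) (hA : 0 ≤ A₂)
    (hMb : 0 ≤ Mb) (hT : 0 < T) (hn : 0 < n) :
    ∃ x₀ : ℝ, x₀ < -μ ∧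
      deriv (fun s => Omega μ q₁ A₂ Mb T n s 0) x₀ = 0 ∧
      gfun μ q₁ A₂ Mb T n x₀ = 0 := by
  obtain ⟨hμ0, hμ1⟩ := hμ
  have hn2 : (0:ℝ) < n ^ 2 := by positivity
  set r : ℝ := (1 - μ) * q₁ / (2 * n ^ 2 + 1) with hr
  have hrpos : 0 < r := div_pos (mul_pos (by linarith) hq) (by positivity)
  have hrval : (2 * n ^ 2 + 1) * r = (1 - μ) * q₁ := by
    rw [hr]; field_simp
  clear_value r
  set δ : ℝ := min 1 (Real.sqrt r) with hδ
  have hδpos : 0 < δ := lt_min one_pos (Real.sqrt_pos.mpr hrpos)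
  have hδ1 : δ ≤ 1 := min_le_left _ _
  have hδsq : δ ^ 2 ≤ r := by
    calc δ ^ 2 ≤ Real.sqrt r ^ 2 :=
          pow_le_pow_left₀ hδpos.le (min_le_right _ _) 2
    _ = r := Real.sq_sqrt hrpos.le
  clear_value δ
  set a : ℝ := -μ - δ with ha
  have haμ : a + μ < 0 := by rw [ha]; linarith
  have hax : a < -μ := by rw [ha]; linarith
  have hsq1 : (a + μ) ^ 2 = δ ^ 2 := by rw [ha]; ring
  have haa : -2 ≤ a := by rw [ha]; linarith
  have ha0 : a ≤ 0 := by rw [ha]; linarith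
  clear_value a
  -- gfun is positive at a
  have hga : 0 < gfun μ q₁ A₂ Mb T n a := by
    rw [gfun_rewrite μ q₁ A₂ Mb T n a haμ]
    have e2 : 2 * n ^ 2 + 1 ≤ (1 - μ) * q₁ / (a + μ) ^ 2 := by
      rw [hsq1, le_div_iff₀ (by positivity)]
      nlinarith [mul_le_mul_of_nonneg_left hδsq (show (0:ℝ) ≤ 2 * n ^ 2 + 1 by positivity)]
    have e1 : -(2 * n ^ 2) ≤ n ^ 2 * a := by nlinarith
    have e3 : 0 ≤ μ / (a + μ - 1) ^ 2 := by positivity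
    have e4 : 0 ≤ (3 / 2) * μ * A₂ / (a + μ - 1) ^ 4 := by positivity
    have e5 : Mb * a / Real.sqrt (a ^ 2 + T ^ 2) ^ 3 ≤ 0 := by
      apply div_nonpos_of_nonpos_of_nonneg
      · exact mul_nonpos_of_nonneg_of_nonpos hMb ha0
      · positivity
    linarith
  -- gfun is negative at b
  set K : ℝ := q₁ + 2 + 2 * A₂ + Mb / T ^ 2 with hK
  have hKpos : 0 < K := by positivity
  have hKval : K = q₁ + 2 + 2 * A₂ + Mb / T ^ 2 := hK
  clear_value K
  have hKn : 0 < K / n ^ 2 := by positivity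
  set b : ℝ := -μ - 1 - K / n ^ 2 with hb
  have hbμ : b + μ < 0 := by rw [hb]; linarith
  have hba : b ≤ a := by rw [hb]; linarith
  have hb1 : b + μ ≤ -1 := by rw [hb]; linarith
  have hb0 : 0 ≤ -b := by rw [hb]; linarith
  have hbval : n ^ 2 * b = n ^ 2 * (-μ - 1) - K := by
    rw [hb]; field_simp
  clear_value b
  clear hr hδ ha hb hK
  have hgb : gfun μ q₁ A₂ Mb T n b < 0 := by
    rw [gfun_rewrite μ q₁ A₂ Mb T n b hbμ]
    have hb2 : b + μ - 1 ≤ -2 := by linarith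
    have s1 : (1:ℝ) ≤ (b + μ) ^ 2 := by nlinarith
    have s2 : (1:ℝ) ≤ (b + μ - 1) ^ 2 := by nlinarith
    have s4 : (1:ℝ) ≤ (b + μ - 1) ^ 4 := by
      calc (1:ℝ) = 1 ^ 2 := by norm_num
      _ ≤ ((b + μ - 1) ^ 2) ^ 2 := pow_le_pow_left₀ zero_le_one s2 2
      _ = (b + μ - 1) ^ 4 := by ring
    have e2 : (1 - μ) * q₁ / (b + μ) ^ 2 ≤ q₁ := by
      rw [div_le_iff₀ (by linarith)]
      have h1 := mul_le_mul_of_nonneg_left s1 hq.le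
      have h2 : (1 - μ) * q₁ ≤ 1 * q₁ :=
        mul_le_mul_of_nonneg_right (by linarith) hq.le
      linarith
    have e3 : μ / (b + μ - 1) ^ 2 ≤ 1 := by
      rw [div_le_iff₀ (by linarith)]
      linarith [s2]
    have e4 : (3 / 2) * μ * A₂ / (b + μ - 1) ^ 4 ≤ 2 * A₂ := by
      rw [div_le_iff₀ (by linarith)]
      have h1 := mul_le_mul_of_nonneg_left s4 (show (0:ℝ) ≤ 2 * A₂ by linarith)
      have h2 : μ * A₂ ≤ 1 * A₂ := mul_le_mul_of_nonneg_right hμ1.le hA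
      linarith
    have e1 : n ^ 2 * b ≤ -K := by
      have h1 : n ^ 2 * (-μ - 1) ≤ 0 :=
        mul_nonpos_of_nonneg_of_nonpos (by positivity) (by linarith)
      linarith [hbval]
    have e5 : -(Mb * b / Real.sqrt (b ^ 2 + T ^ 2) ^ 3) ≤ Mb / T ^ 2 := by
      set S : ℝ := Real.sqrt (b ^ 2 + T ^ 2) with hS
      have hSpos : 0 < S := Real.sqrt_pos.mpr (by positivity)
      have hTS : T ≤ S := by
        rw [hS, show b ^ 2 + T ^ 2 = T ^ 2 + b ^ 2 by ring]
        calc T = Real.sqrt (T ^ 2) := (Real.sqrt_sq hT.le).symm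
        _ ≤ _ := Real.sqrt_le_sqrt (by linarith [sq_nonneg b])
      have hbS : -b ≤ S := by
        calc -b = Real.sqrt ((-b) ^ 2) := (Real.sqrt_sq hb0).symm
        _ ≤ S := Real.sqrt_le_sqrt (by linarith [sq_nonneg T, sq_nonneg b,
            show (-b) ^ 2 = b ^ 2 from by ring])
      clear_value S
      have hS0 : 0 ≤ S := le_trans hT.le hTS
      have hTT : T * T ≤ S * S := mul_le_mul hTS hTS hT.le hS0
      have hc : (T * T) * (-b) ≤ (S * S) * S :=
        mul_le_mul hTT hbS hb0 (mul_nonneg hS0 hS0)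
      have hcube : T ^ 2 * (-b) ≤ S ^ 3 := by
        have e : T ^ 2 * (-b) = (T * T) * (-b) := by ring
        have e' : S ^ 3 = (S * S) * S := by ring
        linarith
      have hrw : -(Mb * b / S ^ 3) = Mb * (-b) / S ^ 3 := by ring
      rw [hrw, div_le_div_iff₀ (by positivity) (by positivity)]
      have := mul_le_mul_of_nonneg_left hcube hMb
      linarith
    rw [hKval] at e1
    linarith
  -- intermediate value theorem
  have hcont : ContinuousOn (fun x => gfun μ q₁ A₂ Mb T n x) (Set.Icc b a) :=
    (gfun_continuousOn μ q₁ A₂ Mb T n a hT hax).mono (fun x hx => Set.mem_Iic.mpr hx.2)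
  have hsub := intermediate_value_Icc hba hcont
  have h0mem : (0:ℝ) ∈ Set.Icc (gfun μ q₁ A₂ Mb T n b) (gfun μ q₁ A₂ Mb T n a) :=
    ⟨hgb.le, hga.le⟩
  obtain ⟨x₀, hx₀mem, hgx₀⟩ := hsub h0mem
  have hx₀lt : x₀ < -μ := lt_of_le_of_lt hx₀mem.2 hax
  exact ⟨x₀, hx₀lt, by
    rw [(hasDerivAt_Omega μ q₁ A₂ Mb T n x₀ hT hx₀lt).deriv]; exact hgx₀, hgx₀⟩
end
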